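/- Let G = PGL(2,F). If f in S(G) is such that the restriction of f to the closed set N-bar of unipotent elements lies in K_u, then there exists epsilon > 0 such that the restriction of f to G^epsilon = { g in G : |p(g)| <= epsilon } lies in K, where p(g) = tr^2(g~)/det(g~) - 4 for a representative g~ in GL(2,F). -/

import Mathlib

/-!
Common setup: `F` a nonarchimedean local field (modelled as a complete,
locally compact, nontrivially normed field whose norm is nonarchimedean),
`PGL2 F = GL(2,F)/center` the projective linear group, Hecke algebra of
compactly supported locally constant functions (identified with measures via
a fixed Haar measure), weightless functions, and conjugation coinvariants.
-/

open MeasureTheory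

noncomputable section

/-- `GL(2,F)`. -/
abbrev GL2 (F : Type) [Field F] := Matrix.GeneralLinearGroup (Fin 2) F

/-- `PGL(2,F) = GL(2,F)/Z`. -/
abbrev PGL2 (F : Type) [Field F] := GL2 F ⧸ Subgroup.center (GL2 F)

variable {F : Type} [Field F]

/-- The projection `GL(2,F) → PGL(2,F)`. -/
def pgl : GL2 F →* PGL2 F := QuotientGroup.mk' _

/-- The standard unipotent matrix `[[1,x],[0,1]]`, as an element of `GL(2,F)`;
the standard unipotent radical `U` of the standard Borel is its image. -/
def unip (x : F) : GL2 F :=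
  ⟨Matrix.of ![![1, x], ![0, 1]], Matrix.of ![![1, -x], ![0, 1]],
    by ext i j; fin_cases i <;> fin_cases j <;>
      simp [Matrix.mul_apply, Fin.sum_univ_two],
    by ext i j; fin_cases i <;> fin_cases j <;>
      simp [Matrix.mul_apply, Fin.sum_univ_two]⟩

/-- The diagonal torus element `diag(a,1)` of `GL(2,F)`; the images of these
elements form the standard maximal (split) torus of `PGL(2,F)`. -/
def diagT (a : Fˣ) : GL2 F :=
  ⟨Matrix.of ![![(a : F), 0], ![0, 1]], Matrix.of ![![((a⁻¹ : Fˣ) : F), 0], ![0, 1]],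
    by ext i j; fin_cases i <;> fin_cases j <;>
      simp [Matrix.mul_apply, Fin.sum_univ_two],
    by ext i j; fin_cases i <;> fin_cases j <;>
      simp [Matrix.mul_apply, Fin.sum_univ_two]⟩

/-- Compactly supported locally constant complex functions on `X`
(the Hecke space `S(X)` once a Haar measure is fixed), as a subspace. -/
def heckeSpace (X : Type*) [TopologicalSpace X] : Submodule ℂ (X → ℂ) where
  carrier := {f | IsLocallyConstant f ∧ HasCompactSupport f}
  zero_mem' := ⟨IsLocallyConstant.const 0, HasCompactSupport.zero⟩
  add_mem' := fun hf hg => ⟨hf.1.add hg.1, hf.2.add hg.2⟩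
  smul_mem' := fun c f hf =>
    ⟨hf.1.comp (fun z => c * z),
     hf.2.mono (fun x hx => by
       simp only [Function.mem_support, Pi.smul_apply, smul_eq_mul] at hx ⊢
       exact fun h => hx (by rw [h, mul_zero]))⟩

/-- The conjugation action `(^g f)(x) = f (g⁻¹ x g)`. -/
def conjAct {G : Type*} [Group G] (g : G) (f : G → ℂ) : G → ℂ :=
  fun x => f (g⁻¹ * x * g)

/-- The subspace of a `G`-stable space `V` of functions on `G` spanned by
elements of the form `^g w - w`; the quotient `V ⧸ conjRel V` is the space
`H_0(G, V)` of conjugation coinvariants. -/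
def conjRel {G : Type*} [Group G] (V : Submodule ℂ (G → ℂ)) : Submodule ℂ V :=
  Submodule.span ℂ {v : V | ∃ (g : G) (w : V), (v : G → ℂ) = conjAct g w - w}

/-- `H_0(G, V)`: the conjugation coinvariants of `V`. -/
abbrev coinvariants {G : Type*} [Group G] (V : Submodule ℂ (G → ℂ)) :=
  V ⧸ conjRel V

variable {F : Type} [NontriviallyNormedField F] [CompleteSpace F]
  [LocallyCompactSpace F] [CharZero F]
  [MeasurableSpace F] [BorelSpace F]
  [MeasurableSpace (PGL2 F)] [BorelSpace (PGL2 F)]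

/-- `p(g) = tr(g~)²/det(g~) - 4`, computed on any representative `g~ ∈ GL(2,F)`
of `g ∈ PGL(2,F)` (the value is independent of the representative). -/
def pOf (g : PGL2 F) : F :=
  (Matrix.trace ((Quotient.out g : GL2 F) : Matrix (Fin 2) (Fin 2) F)) ^ 2 /
    (Matrix.det ((Quotient.out g : GL2 F) : Matrix (Fin 2) (Fin 2) F)) - 4

/-- The set `G_s` of regular split semisimple elements of `PGL(2,F)`:
conjugates of nontrivial diagonal elements. -/
def splitRegSet (F : Type) [NontriviallyNormedField F] : Set (PGL2 F) :=
  {h | ∃ (k : PGL2 F) (a : Fˣ), (a : F) ≠ 1 ∧ h = k * pgl (diagT a) * k⁻¹}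

/-- The conjugacy class of `g₀`. -/
def conjClass {G : Type*} [Group G] (g₀ : G) : Set G :=
  {h | ∃ k : G, h = k * g₀ * k⁻¹}

/-- The space `K(X)` of weightless measures supported on a conjugation
invariant subset `X ⊆ PGL(2,F)`: compactly supported locally constant
functions `f` supported on `X` such that `∫_{U_Q} f(l·u) du = 0` for every
proper parabolic (= Borel) subgroup `Q = L·U_Q` and every `l ∈ L` with
`l·U_Q ⊆ X`.  Every pair (Borel subgroup, Levi = maximal torus, element `l`)
of `PGL(2,F)` is conjugate to a standard one, so the condition is stated for
all conjugates of the standard pair; the (mathematically automatic)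
integrability of the restriction to the coset is included so that `K(X)` is a
subspace.  For `X = univ` this is the space `K` of weightless functions. -/
def Kspace (μF : Measure F) (X : Set (PGL2 F)) : Submodule ℂ (PGL2 F → ℂ) where
  carrier := {f | IsLocallyConstant f ∧ HasCompactSupport f ∧
    tsupport f ⊆ X ∧
    ∀ (g : PGL2 F) (b : Fˣ),
      (∀ x : F, g * pgl (diagT b * unip x) * g⁻¹ ∈ X) →
      Integrable (fun x : F => f (g * pgl (diagT b * unip x) * g⁻¹)) μF ∧
      ∫ x : F, f (g * pgl (diagT b * unip x) * g⁻¹) ∂μF = 0}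
  zero_mem' := by
    refine ⟨IsLocallyConstant.const 0, HasCompactSupport.zero, by simp [tsupport],
      fun g b _ => ?_⟩
    simp only [Pi.zero_apply]
    exact ⟨integrable_zero F ℂ μF, integral_zero F ℂ⟩
  add_mem' := by
    rintro f h ⟨lf, cf, sf, wf⟩ ⟨lh, ch, sh, wh⟩
    refine ⟨lf.add lh, cf.add ch, ?_, fun g b hX => ?_⟩
    · refine ((closure_mono (Function.support_add f h)).trans ?_)
      rw [closure_union]
      exact Set.union_subset sf sh
    · obtain ⟨If, Ef⟩ := wf g b hX
      obtain ⟨Ih, Eh⟩ := wh g b hX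
      have hfun : (fun x : F => (f + h) (g * pgl (diagT b * unip x) * g⁻¹)) =
          fun x : F => f (g * pgl (diagT b * unip x) * g⁻¹) +
            h (g * pgl (diagT b * unip x) * g⁻¹) := rfl
      rw [hfun]
      exact ⟨If.add Ih, by rw [integral_add If Ih, Ef, Eh, add_zero]⟩
  smul_mem' := by
    rintro c f ⟨lf, cf, sf, wf⟩
    have hsupp : Function.support (c • f) ⊆ Function.support f := fun x hx => by
      simp only [Function.mem_support, Pi.smul_apply, smul_eq_mul] at hx ⊢
      exact fun h => hx (by rw [h, mul_zero])
    refine ⟨lf.comp (fun z => c * z), cf.mono hsupp,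
      (closure_mono hsupp).trans sf, fun g b hX => ?_⟩
    obtain ⟨If, Ef⟩ := wf g b hX
    have hfun : (fun x : F => (c • f) (g * pgl (diagT b * unip x) * g⁻¹)) =
        fun x : F => c • f (g * pgl (diagT b * unip x) * g⁻¹) := rfl
    rw [hfun]
    exact ⟨If.smul c, by rw [integral_smul, Ef, smul_zero]⟩

/-- The subspace of the space `K = Kspace μF univ` of weightless functions
consisting of functions supported on a (conjugation invariant) subset `X`. -/
def KsuppIn (μF : Measure F) (X : Set (PGL2 F)) : Submodule ℂ (PGL2 F → ℂ) :=
  Kspace μF Set.univ ⊓ Submodule.mk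
    (toAddSubmonoid := {
      carrier := {f | tsupport f ⊆ X}
      zero_mem' := by simp [tsupport]
      add_mem' := by
        intro f h sf sh
        refine ((closure_mono (Function.support_add f h)).trans ?_)
        rw [closure_union]
        exact Set.union_subset sf sh })
    (by
      intro c f sf
      refine Set.Subset.trans (closure_mono ?_) sf
      intro x hx
      simp only [Function.mem_support, Pi.smul_apply, smul_eq_mul] at hx ⊢
      exact fun h => hx (by rw [h, mul_zero]))

/-- The distribution `f̂` obtained by averaging `f` over conjugation, paired
against a test function `h`:
`⟨f̂, h⟩ = ∫_G ⟨^g f, h⟩ dg = ∫_G ∫_G f(g⁻¹ x g) h(x) dx dg`. -/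
def fhat (μG : Measure (PGL2 F)) (f h : PGL2 F → ℂ) : ℂ :=
  ∫ g : PGL2 F, ∫ x : PGL2 F, f (g⁻¹ * x * g) * h x ∂μG ∂μG

/-- A smooth representation of a topological group `G` on a complex vector
space: every vector has open stabilizer. -/
structure SmoothRepn (G : Type*) [Group G] [TopologicalSpace G] where
  (V : Type)
  [acg : AddCommGroup V]
  [mod : Module ℂ V]
  (ρ : G →* Module.End ℂ V)
  (smooth : ∀ v : V, IsOpen {g : G | ρ g v = v})

attribute [instance] SmoothRepn.acg SmoothRepn.mod

/-- The `K`-fixed vectors of a smooth representation. -/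
def SmoothRepn.fixedBy {G : Type*} [Group G] [TopologicalSpace G]
    (R : SmoothRepn G) (K : Subgroup G) : Submodule ℂ R.V where
  carrier := {v | ∀ k ∈ K, R.ρ k v = v}
  zero_mem' := fun k _ => map_zero (R.ρ k)
  add_mem' := by
    intro a b ha hb k hk
    rw [map_add, ha k hk, hb k hk]
  smul_mem' := by
    intro c v hv k hk
    rw [_root_.map_smul, hv k hk]

/-- Admissibility: the fixed vectors of every compact open subgroup form a
finite dimensional space. -/
def SmoothRepn.IsAdmissible {G : Type*} [Group G] [TopologicalSpace G]
    (R : SmoothRepn G) : Prop :=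
  ∀ K : Subgroup G, IsOpen (K : Set G) → IsCompact (K : Set G) →
    FiniteDimensional ℂ (R.fixedBy K)

/-- Irreducibility. -/
def SmoothRepn.IsIrreducible {G : Type*} [Group G] [TopologicalSpace G]
    (R : SmoothRepn G) : Prop :=
  Nontrivial R.V ∧ ∀ W : Submodule ℂ R.V,
    (∀ (g : G), ∀ v ∈ W, R.ρ g v ∈ W) → W = ⊥ ∨ W = ⊤

/-- The integral of a compactly supported locally constant function valued in
a complex vector space (without topology): such a function takes finitely many
values, each on a measurable set of finite measure, and the integral is the
corresponding finite weighted sum.  (Junk value `0` if the function does not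
have this form.) -/
def weakIntegral {G V : Type*} [MeasurableSpace G] [AddCommGroup V]
    [Module ℂ V] (μ : MeasureTheory.Measure G) (φ : G → V) : V :=
  letI := Classical.dec
  if h : {c : V | c ≠ 0 ∧ φ ⁻¹' {c} ≠ ∅ ∧ μ (φ ⁻¹' {c}) ≠ ⊤}.Finite ∧
      {c : V | c ≠ 0 ∧ φ ⁻¹' {c} ≠ ∅ ∧ μ (φ ⁻¹' {c}) = ⊤} = ∅ then
    ∑ c ∈ h.1.toFinset, (((μ (φ ⁻¹' {c})).toReal : ℝ) : ℂ) • c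
  else 0

/-- `α` is the character distribution of the representation `R`:
for every `f` in the Hecke algebra, `α(f) = Tr ρ(f)` where
`ρ(f) = ∫ f(g) ρ(g) dg`; the trace is computed on any finite dimensional
subspace through which `ρ(f)` factors (for admissible `R` such a subspace
exists and the trace does not depend on the choice). -/
def IsCharacterOf {G : Type*} [Group G] [TopologicalSpace G]
    [MeasurableSpace G] (μG : MeasureTheory.Measure G)
    (α : (G → ℂ) → ℂ) (R : SmoothRepn G) : Prop :=
  ∀ f : G → ℂ, IsLocallyConstant f → HasCompactSupport f →
    ∀ φ : Module.End ℂ R.V,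
      (∀ v, φ v = weakIntegral μG (fun g => f g • R.ρ g v)) →
      ∀ (W : Submodule ℂ R.V), FiniteDimensional ℂ W →
        ∀ (hr : LinearMap.range φ ≤ W),
          α f = LinearMap.trace ℂ W
            (φ.restrict (fun x _ => hr (LinearMap.mem_range_self φ x)))

/-- Two distributions have the same germ at the identity: they agree on all
test functions supported in some open neighbourhood of `1`. -/
def GermEqAtOne {G : Type*} [Group G] [TopologicalSpace G] [One G]
    (α β : (G → ℂ) → ℂ) : Prop :=
  ∃ U : Set G, IsOpen U ∧ (1 : G) ∈ U ∧
    ∀ h : G → ℂ, IsLocallyConstant h → HasCompactSupport h →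
      tsupport h ⊆ U → α h = β h

/-- Cuspidality of a smooth representation of `PGL(2,F)`: the Jacquet module
with respect to (the unipotent radical of) a Borel subgroup vanishes, i.e.
every vector is a linear combination of vectors `ρ(u)v - v`, `u ∈ U`. -/
def IsCuspidal (R : SmoothRepn (PGL2 F)) : Prop :=
  ∀ v : R.V, v ∈ Submodule.span ℂ
    {w : R.V | ∃ (x : F) (v' : R.V), w = R.ρ (pgl (unip x)) v' - v'}

/-- Membership in the space `E` of invariant distributions `α` on
`G = PGL(2,F)` such that: `α` is linear and conjugation invariant; the support
of `α` is contained in the conjugation saturation of a compact set; the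
restriction of `α` to `G ∖ {e}` is a locally constant function; and the germ
of `α` at `e` lies in the span `D_e` of germs at `e` of characters of
irreducible (smooth admissible) representations. -/
def memE (μG : Measure (PGL2 F)) (α : (PGL2 F → ℂ) → ℂ) : Prop :=
  (∀ h₁ h₂, h₁ ∈ heckeSpace (PGL2 F) → h₂ ∈ heckeSpace (PGL2 F) →
      α (h₁ + h₂) = α h₁ + α h₂) ∧
  (∀ (c : ℂ) h, h ∈ heckeSpace (PGL2 F) → α (c • h) = c * α h) ∧
  (∀ (g : PGL2 F) h, h ∈ heckeSpace (PGL2 F) → α (conjAct g h) = α h) ∧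
  (∃ C : Set (PGL2 F), IsCompact C ∧
    ∀ h ∈ heckeSpace (PGL2 F),
      (∀ x ∈ tsupport h, ¬ ∃ c ∈ C, ∃ k : PGL2 F, x = k * c * k⁻¹) →
      α h = 0) ∧
  (∃ φ : PGL2 F → ℂ,
    IsLocallyConstant (Set.restrict {(1 : PGL2 F)}ᶜ φ) ∧
    ∀ h ∈ heckeSpace (PGL2 F), tsupport h ⊆ {(1 : PGL2 F)}ᶜ →
      α h = ∫ x, φ x * h x ∂μG) ∧
  (∃ (k : ℕ) (c : Fin k → ℂ) (R : Fin k → SmoothRepn (PGL2 F))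
      (χ : Fin k → (PGL2 F → ℂ) → ℂ),
    (∀ i, (R i).IsAdmissible ∧ (R i).IsIrreducible ∧
      IsCharacterOf μG (χ i) (R i)) ∧
    GermEqAtOne α (fun h => ∑ i, c i * χ i h))

/-- The closed set `N̄` of unipotent elements of `PGL(2,F)`: the elements
with `p(g) = 0` (representatives with a double eigenvalue). -/
def unipSet (F : Type) [NontriviallyNormedField F] : Set (PGL2 F) :=
  {g | pOf g = 0}

/-- The set `G^ε = {g : |p(g)| ≤ ε}`. -/
def Geps (F : Type) [NontriviallyNormedField F] (ε : ℝ) : Set (PGL2 F) :=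
  {g | ‖pOf g‖ ≤ ε}

section Aux
variable {F : Type} [Field F]

lemma GL2.ext' {A B : GL2 F} (h : (A : Matrix (Fin 2) (Fin 2) F) = B) : A = B := Units.ext h

@[simp] lemma unip_val (x : F) : ((unip x : GL2 F) : Matrix (Fin 2) (Fin 2) F) = Matrix.of ![![1, x], ![0, 1]] := rfl
@[simp] lemma diagT_val (a : Fˣ) : ((diagT a : GL2 F) : Matrix (Fin 2) (Fin 2) F) = Matrix.of ![![(a : F), 0], ![0, 1]] := rfl

lemma diagT_one : (diagT 1 : GL2 F) = 1 := by
  apply Units.ext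
  ext i j
  fin_cases i <;> fin_cases j <;> simp [diagT]

lemma conj2 (b : Fˣ) (x : F) : (diagT b : GL2 F) * unip x = unip ((b : F) * x) * diagT b := by
  apply Units.ext
  push_cast [Units.val_mul]
  ext i j
  fin_cases i <;> fin_cases j <;>
    simp [diagT, unip, Matrix.mul_apply, Fin.sum_univ_two]

lemma conj1 (a b : Fˣ) (x₀ x : F) :
    ((diagT a : GL2 F) * unip x₀) * (diagT b * unip x) =
      (unip (((a * b : Fˣ) : F) * x + (a : F) * (1 - (b : F)) * x₀) * diagT b) *
        (diagT a * unip x₀) := by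
  apply Units.ext
  push_cast [Units.val_mul]
  ext i j
  fin_cases i <;> fin_cases j <;>
    simp [diagT, unip, Matrix.mul_apply, Fin.sum_univ_two] <;> ring

end Aux
section Aux2
variable {F : Type} [Field F]

local notation "M2" => Matrix (Fin 2) (Fin 2) F

/-- lower unipotent, used to pin down the center -/
def lunip (x : F) : GL2 F :=
  ⟨Matrix.of ![![1, 0], ![x, 1]], Matrix.of ![![1, 0], ![-x, 1]],
    by ext i j; fin_cases i <;> fin_cases j <;>
      simp [Matrix.mul_apply, Fin.sum_univ_two],
    by ext i j; fin_cases i <;> fin_cases j <;>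
      simp [Matrix.mul_apply, Fin.sum_univ_two]⟩

lemma center_scalar {z : GL2 F} (hz : z ∈ Subgroup.center (GL2 F)) :
    ∃ lam : F, lam ≠ 0 ∧ (z : M2) = lam • (1 : M2) := by
  rw [Subgroup.mem_center_iff] at hz
  have h1 : ((unip 1 : GL2 F) : M2) * (z : M2) = (z : M2) * ((unip 1 : GL2 F) : M2) := by
    have := congrArg Units.val (hz (unip 1)); rwa [Units.val_mul, Units.val_mul] at this
  have h2 : ((lunip 1 : GL2 F) : M2) * (z : M2) = (z : M2) * ((lunip 1 : GL2 F) : M2) := by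
    have := congrArg Units.val (hz (lunip 1)); rwa [Units.val_mul, Units.val_mul] at this
  have e10 : (z : M2) 1 0 = 0 := by
    have h00 : (((unip 1 : GL2 F) : M2) * (z : M2)) 0 0
        = ((z : M2) * ((unip 1 : GL2 F) : M2)) 0 0 := by rw [h1]
    simp [unip, Matrix.mul_apply, Fin.sum_univ_two] at h00
    linear_combination h00
  have e11 : (z : M2) 1 1 = (z : M2) 0 0 := by
    have h01 : (((unip 1 : GL2 F) : M2) * (z : M2)) 0 1
        = ((z : M2) * ((unip 1 : GL2 F) : M2)) 0 1 := by rw [h1]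
    simp [unip, Matrix.mul_apply, Fin.sum_univ_two] at h01
    linear_combination h01
  have e01 : (z : M2) 0 1 = 0 := by
    have h00 : (((lunip 1 : GL2 F) : M2) * (z : M2)) 0 0
        = ((z : M2) * ((lunip 1 : GL2 F) : M2)) 0 0 := by rw [h2]
    simp [lunip, Matrix.mul_apply, Fin.sum_univ_two] at h00
    linear_combination h00
  refine ⟨(z : M2) 0 0, ?_, ?_⟩
  · have hdet : IsUnit ((z : M2).det) := by
      rw [← Matrix.isUnit_iff_isUnit_det]
      exact ⟨z, rfl⟩
    rw [Matrix.det_fin_two, e10, e11, e01] at hdet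
    intro h0
    rw [h0] at hdet
    simp at hdet
  · ext i j
    fin_cases i <;> fin_cases j <;>
      simp [e10, e11, e01, Matrix.one_apply]

lemma pgl_eq_of_smul {V W : GL2 F} {lam : F} (h : (V : M2) = lam • (W : M2)) :
    pgl V = pgl W := by
  have hval : (V : M2) * ((W⁻¹ : GL2 F) : M2) = lam • (1 : M2) := by
    rw [h, Matrix.smul_mul]
    congr 1
    rw [← Units.val_mul, mul_inv_cancel, Units.val_one]
  have hc : V * W⁻¹ ∈ Subgroup.center (GL2 F) := by
    rw [Subgroup.mem_center_iff]
    intro g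
    refine Units.ext ?_
    simp only [Units.val_mul]
    rw [mul_assoc, hval, ← mul_assoc, hval, Matrix.mul_smul, Matrix.smul_mul, mul_one, one_mul]
  calc pgl V = pgl (V * W⁻¹ * W) := (congrArg pgl (inv_mul_cancel_right V W)).symm
  _ = pgl (V * W⁻¹) * pgl W := map_mul _ _ _
  _ = pgl W := by
    rw [show pgl (V * W⁻¹) = 1 from (QuotientGroup.eq_one_iff _).mpr hc, one_mul]

end Aux2

section Aux3
variable {F : Type} [NontriviallyNormedField F]
local notation "M2" => Matrix (Fin 2) (Fin 2) F

lemma pOf_pgl (M : GL2 F) :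
    pOf (pgl M) = (Matrix.trace (M : M2)) ^ 2 / (Matrix.det (M : M2)) - 4 := by
  have hout : pgl (Quotient.out (pgl M)) = pgl M := by
    rw [pgl, QuotientGroup.mk'_apply]
    exact QuotientGroup.out_eq' _
  have hmem : M⁻¹ * Quotient.out (pgl M) ∈ Subgroup.center (GL2 F) := by
    rw [← QuotientGroup.eq_one_iff (G := GL2 F) (N := Subgroup.center (GL2 F))]
    calc (QuotientGroup.mk (M⁻¹ * Quotient.out (pgl M)) : PGL2 F)
        = pgl (M⁻¹ * Quotient.out (pgl M)) := rfl
      _ = (pgl M)⁻¹ * pgl (Quotient.out (pgl M)) := by rw [map_mul, map_inv]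
      _ = 1 := by rw [hout, inv_mul_cancel]
  obtain ⟨lam, hlam, hval⟩ := center_scalar hmem
  have hrep : ((Quotient.out (pgl M) : GL2 F) : M2) = lam • (M : M2) := by
    have hq : (Quotient.out (pgl M) : GL2 F) = M * (M⁻¹ * Quotient.out (pgl M)) := by
      rw [mul_inv_cancel_left]
    rw [hq, Units.val_mul, hval, Matrix.mul_smul, mul_one]
  have hdetM : Matrix.det (M : M2) ≠ 0 := by
    have : IsUnit (Matrix.det (M : M2)) := by
      rw [← Matrix.isUnit_iff_isUnit_det]; exact ⟨M, rfl⟩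
    exact this.ne_zero
  unfold pOf
  rw [hrep, Matrix.trace_smul, Matrix.det_smul]
  simp only [smul_eq_mul]
  congr 1
  field_simp
  simp [Fintype.card_fin, mul_comm]

end Aux3
section Aux4
variable {F : Type} [NontriviallyNormedField F]
local notation "M2" => Matrix (Fin 2) (Fin 2) F

lemma det_ne_zero' (M : GL2 F) : Matrix.det (M : M2) ≠ 0 := by
  have : IsUnit (Matrix.det (M : M2)) := by
    rw [← Matrix.isUnit_iff_isUnit_det]; exact ⟨M, rfl⟩
  exact this.ne_zero

lemma pOf_pgl_conj (W V : GL2 F) : pOf (pgl (W * V * W⁻¹)) = pOf (pgl V) := by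
  rw [pOf_pgl, pOf_pgl]
  have htr : Matrix.trace ((W * V * W⁻¹ : GL2 F) : M2) = Matrix.trace (V : M2) := by
    simp only [Units.val_mul]
    rw [Matrix.trace_mul_comm, ← mul_assoc, ← Units.val_mul, inv_mul_cancel, Units.val_one,
      one_mul]
  have hdet : Matrix.det ((W * V * W⁻¹ : GL2 F) : M2) = Matrix.det (V : M2) := by
    simp only [Units.val_mul, Matrix.det_mul]
    have : Matrix.det ((W : M2)) * Matrix.det ((W⁻¹ : GL2 F) : M2) = 1 := by
      rw [← Matrix.det_mul, ← Units.val_mul, mul_inv_cancel, Units.val_one, Matrix.det_one]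
    calc Matrix.det (W : M2) * Matrix.det (V : M2) * Matrix.det ((W⁻¹ : GL2 F) : M2)
        = Matrix.det (V : M2) * (Matrix.det (W : M2) * Matrix.det ((W⁻¹ : GL2 F) : M2)) := by
          ring
      _ = Matrix.det (V : M2) := by rw [this, mul_one]
  rw [htr, hdet]

lemma pOf_DU (b : Fˣ) (x : F) :
    pOf (pgl ((diagT b : GL2 F) * unip x)) = ((b : F) - 1) ^ 2 / (b : F) := by
  rw [pOf_pgl]
  have htr : Matrix.trace (((diagT b : GL2 F) * unip x : GL2 F) : M2) = (b : F) + 1 := by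
    rw [Units.val_mul]
    simp [diagT, unip, Matrix.trace_fin_two, Matrix.mul_apply, Fin.sum_univ_two]
  have hdet : Matrix.det (((diagT b : GL2 F) * unip x : GL2 F) : M2) = (b : F) := by
    rw [Units.val_mul, Matrix.det_mul]
    simp [diagT, unip, Matrix.det_fin_two]
  rw [htr, hdet]
  have hb : (b : F) ≠ 0 := Units.ne_zero b
  field_simp
  ring

lemma norm_analysis (hna : IsNonarchimedean (fun x : F => ‖x‖)) {b : Fˣ} {ε : ℝ}
    (hε : ε < 1) (hc : ‖((b : F) - 1) ^ 2 / (b : F)‖ ≤ ε) :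
    ‖(b : F)‖ = 1 ∧ ‖(b : F) - 1‖ ^ 2 ≤ ε := by
  have hb0 : (b : F) ≠ 0 := Units.ne_zero b
  have hbn : 0 < ‖(b : F)‖ := norm_pos_iff.mpr hb0
  have hcn : ‖((b : F) - 1) ^ 2 / (b : F)‖ = ‖(b : F) - 1‖ ^ 2 / ‖(b : F)‖ := by
    rw [norm_div, norm_pow]
  have hb1 : ‖(b : F)‖ = 1 := by
    rcases lt_trichotomy ‖(b : F)‖ 1 with h | h | h
    · exfalso
      have k1 : ‖(b : F) - 1‖ = 1 := by
        have le1 : ‖(b : F) - 1‖ ≤ 1 := by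
          have := hna (b : F) (-1)
          simp only [norm_neg, norm_one] at this
          have h2 : ((b : F) + -1) = (b : F) - 1 := by ring
          rw [h2] at this
          exact this.trans (max_le h.le le_rfl)
        have ge1 : 1 ≤ ‖(b : F) - 1‖ := by
          have := hna (b : F) (-((b : F) - 1))
          have h2 : ((b : F) + -((b : F) - 1)) = 1 := by ring
          rw [h2] at this
          simp only [norm_neg, norm_one, le_sup_iff, le_max_iff] at this
          rcases this with h3 | h3
          · linarith
          · exact h3
        linarith
      rw [hcn, k1, one_pow] at hc
      have : (1 : ℝ) < 1 / ‖(b : F)‖ := by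
        rw [lt_div_iff₀ hbn]; linarith
      linarith
    · exact h
    · exfalso
      have k2 : ‖(b : F) - 1‖ = ‖(b : F)‖ := by
        have le1 : ‖(b : F) - 1‖ ≤ ‖(b : F)‖ := by
          have := hna (b : F) (-1)
          simp only [norm_neg, norm_one] at this
          have h2 : ((b : F) + -1) = (b : F) - 1 := by ring
          rw [h2] at this
          exact this.trans (max_le le_rfl h.le)
        have ge1 : ‖(b : F)‖ ≤ ‖(b : F) - 1‖ := by
          have := hna ((b : F) - 1) 1
          have h2 : ((b : F) - 1 + 1) = (b : F) := by ring
          rw [h2] at this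
          simp only [norm_neg, norm_one, le_sup_iff, le_max_iff] at this
          rcases this with h3 | h3
          · exact h3
          · linarith
        linarith
      rw [hcn, k2] at hc
      have hgt : (1 : ℝ) < ‖(b : F)‖ ^ 2 / ‖(b : F)‖ := by
        rw [lt_div_iff₀ hbn]
        have : ‖(b : F)‖ * 1 < ‖(b : F)‖ * ‖(b : F)‖ := by
          exact mul_lt_mul_of_pos_left h hbn
        calc 1 * ‖(b : F)‖ = ‖(b : F)‖ * 1 := by ring
        _ < ‖(b : F)‖ * ‖(b : F)‖ := this
        _ = ‖(b : F)‖ ^ 2 := by ring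
      linarith
  refine ⟨hb1, ?_⟩
  rw [hcn, hb1, div_one] at hc
  exact hc
end Aux4
section Aux5
variable {F : Type} [NontriviallyNormedField F]
local notation "M2" => Matrix (Fin 2) (Fin 2) F

def km (s : F) : Bool → GL2 F
  | false =>
    ⟨Matrix.of ![![1, 0], ![s, 1]], Matrix.of ![![1, 0], ![-s, 1]],
      by ext i j; fin_cases i <;> fin_cases j <;>
        simp [Matrix.mul_apply, Fin.sum_univ_two],
      by ext i j; fin_cases i <;> fin_cases j <;>
        simp [Matrix.mul_apply, Fin.sum_univ_two]⟩
  | true =>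
    ⟨Matrix.of ![![s, 1], ![1, 0]], Matrix.of ![![0, 1], ![1, -s]],
      by ext i j; fin_cases i <;> fin_cases j <;>
        simp [Matrix.mul_apply, Fin.sum_univ_two],
      by ext i j; fin_cases i <;> fin_cases j <;>
        simp [Matrix.mul_apply, Fin.sum_univ_two]⟩

@[simp] lemma km_false_val (s : F) :
    ((km s false : GL2 F) : M2) = Matrix.of ![![1, 0], ![s, 1]] := rfl
@[simp] lemma km_true_val (s : F) :
    ((km s true : GL2 F) : M2) = Matrix.of ![![s, 1], ![1, 0]] := rfl
@[simp] lemma km_false_inv_val (s : F) :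
    (((km s false)⁻¹ : GL2 F) : M2) = Matrix.of ![![1, 0], ![-s, 1]] := rfl
@[simp] lemma km_true_inv_val (s : F) :
    (((km s true)⁻¹ : GL2 F) : M2) = Matrix.of ![![0, 1], ![1, -s]] := rfl

lemma iwasawa (g : PGL2 F) :
    ∃ (s : F) (ch : Bool) (a : Fˣ) (x₀ : F),
      ‖s‖ ≤ 1 ∧ g = pgl (km s ch) * pgl (diagT a * unip x₀) := by
  obtain ⟨N, rfl⟩ := QuotientGroup.mk'_surjective (Subgroup.center (GL2 F)) g
  have hgN : (QuotientGroup.mk' (Subgroup.center (GL2 F))) N = pgl N := rfl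
  rw [hgN]
  set α := (N : M2) 0 0 with hα'
  set β := (N : M2) 0 1 with hβ'
  set γ := (N : M2) 1 0 with hγ'
  set δ := (N : M2) 1 1 with hδ'
  have hdet : α * δ - β * γ ≠ 0 := by
    have := det_ne_zero' N
    rwa [Matrix.det_fin_two] at this
  by_cases hle : ‖γ‖ ≤ ‖α‖
  · have hα : α ≠ 0 := by
      intro h0
      apply hdet
      have hγ0 : γ = 0 := by
        rw [h0] at hle; simp at hle; exact hle
      rw [h0, hγ0]; ring
    refine ⟨γ / α, false, ?_⟩
    have hR : ((km (γ/α) false)⁻¹ * N : GL2 F) = (km (γ/α) false)⁻¹ * N := rfl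
    set R : GL2 F := (km (γ/α) false)⁻¹ * N with hRdef
    have hRval : (R : M2) = Matrix.of ![![α, β], ![0, δ - (γ/α) * β]] := by
      rw [hRdef, Units.val_mul, km_false_inv_val]
      ext i j
      fin_cases i <;> fin_cases j <;>
        simp [Matrix.mul_apply, Fin.sum_univ_two, ← hα', ← hβ', ← hγ', ← hδ'] <;>
        field_simp <;> ring
    set d := δ - (γ/α) * β with hd'
    have hd : d ≠ 0 := by
      intro h0
      have := det_ne_zero' R
      rw [Matrix.det_fin_two, hRval] at this
      simp [h0] at this
    refine ⟨Units.mk0 (α / d) (div_ne_zero hα hd), β / α, ?_, ?_⟩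
    · rw [norm_div]
      exact div_le_one_of_le₀ hle (norm_nonneg _)
    · have hsm : (R : M2) = d • ((diagT (Units.mk0 (α / d) (div_ne_zero hα hd)) * unip (β / α) : GL2 F) : M2) := by
        rw [hRval, Units.val_mul]
        ext i j
        fin_cases i <;> fin_cases j <;>
          simp [diagT, unip, Matrix.mul_apply, Fin.sum_univ_two] <;>
          field_simp <;> ring
      have : pgl R = pgl (diagT (Units.mk0 (α / d) (div_ne_zero hα hd)) * unip (β / α)) :=
        pgl_eq_of_smul hsm
      rw [← this, hRdef]
      rw [← map_mul]
      congr 1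
      rw [mul_inv_cancel_left]
  · push_neg at hle
    have hγ : γ ≠ 0 := by
      intro h0
      rw [h0] at hle
      simp at hle
      have : ‖α‖ ≥ 0 := norm_nonneg _
      linarith
    refine ⟨α / γ, true, ?_⟩
    set R : GL2 F := (km (α/γ) true)⁻¹ * N with hRdef
    have hRval : (R : M2) = Matrix.of ![![γ, δ], ![0, β - (α/γ) * δ]] := by
      rw [hRdef, Units.val_mul, km_true_inv_val]
      ext i j
      fin_cases i <;> fin_cases j <;>
        simp [Matrix.mul_apply, Fin.sum_univ_two, ← hα', ← hβ', ← hγ', ← hδ'] <;>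
        field_simp <;> ring
    set d := β - (α/γ) * δ with hd'
    have hd : d ≠ 0 := by
      intro h0
      have := det_ne_zero' R
      rw [Matrix.det_fin_two, hRval] at this
      simp [h0] at this
    refine ⟨Units.mk0 (γ / d) (div_ne_zero hγ hd), δ / γ, ?_, ?_⟩
    · rw [norm_div]
      exact div_le_one_of_le₀ hle.le (norm_nonneg _)
    · have hsm : (R : M2) = d • ((diagT (Units.mk0 (γ / d) (div_ne_zero hγ hd)) * unip (δ / γ) : GL2 F) : M2) := by
        rw [hRval, Units.val_mul]
        ext i j
        fin_cases i <;> fin_cases j <;>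
          simp [diagT, unip, Matrix.mul_apply, Fin.sum_univ_two] <;>
          field_simp <;> ring
      have : pgl R = pgl (diagT (Units.mk0 (γ / d) (div_ne_zero hγ hd)) * unip (δ / γ)) :=
        pgl_eq_of_smul hsm
      rw [← this, hRdef]
      rw [← map_mul]
      congr 1
      rw [mul_inv_cancel_left]
end Aux5
section Aux6
open Pointwise
variable {F : Type} [NontriviallyNormedField F] [LocallyCompactSpace F]

abbrev Sball (F : Type) [NontriviallyNormedField F] := {t : F // ‖t‖ ≤ (1:ℝ)/2}

lemma tube {Q : Type} [TopologicalSpace Q] [CompactSpace Q]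
    (f : PGL2 F → ℂ) (hlc : IsLocallyConstant f) (hcs : HasCompactSupport f)
    (Θ : Q × Sball F → PGL2 F) (hΘ : Continuous Θ)
    (hΘ1 : ∀ κ : Q, Θ (κ, ⟨0, by norm_num⟩) = 1) :
    ∃ δ : ℝ, 0 < δ ∧ ∀ (κ : Q) (t : Sball F), ‖(t : F)‖ ≤ δ →
      ∀ m : PGL2 F, f (m * Θ (κ, t)) = f m := by
  classical
  haveI : ProperSpace F :=
    ProperSpace.of_nontriviallyNormedField_of_weaklyLocallyCompactSpace F
  haveI : CompactSpace (Sball F) := by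
    have h1 : IsCompact {t : F | ‖t‖ ≤ (1:ℝ)/2} := by
      have : {t : F | ‖t‖ ≤ (1:ℝ)/2} = Metric.closedBall 0 ((1:ℝ)/2) := by
        ext t; simp [Metric.mem_closedBall, dist_zero_right]
      rw [this]
      exact isCompact_closedBall _ _
    exact isCompact_iff_compactSpace.mp h1
  set C := tsupport f with hCdef
  have hC : IsCompact C := hcs
  set N : Set (PGL2 F) := (fun p => (Θ p)⁻¹) '' Set.univ with hNdef
  have hN : IsCompact N := isCompact_univ.image hΘ.inv
  set D : Set (PGL2 F) := C ∪ C * N with hDdef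
  have hD : IsCompact D := hC.union (hC.mul hN)
  set φ : PGL2 F × (Q × Sball F) → ℂ :=
    fun p => f (p.1 * Θ p.2) - f p.1 with hφdef
  have hφ : IsLocallyConstant φ :=
    IsLocallyConstant.comp₂
      (hlc.comp_continuous (continuous_fst.mul (hΘ.comp continuous_snd)))
      (hlc.comp_continuous continuous_fst) Sub.sub
  have hK0closed : IsClosed {p | φ p ≠ 0} := by
    have : {p | φ p ≠ 0} = {p | φ p = 0}ᶜ := by ext p; simp
    rw [this]
    exact (hφ.isOpen_fiber 0).isClosed_compl
  have hsub : {p | φ p ≠ 0} ⊆ D ×ˢ (Set.univ : Set (Q × Sball F)) := by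
    rintro ⟨m, q⟩ hp
    simp only [Set.mem_setOf_eq, hφdef, sub_ne_zero] at hp
    refine Set.mem_prod.mpr ⟨?_, Set.mem_univ _⟩
    by_cases hfm : f m = 0
    · have h2 : f (m * Θ q) ≠ 0 := fun h => hp (by rw [h, hfm])
      have hmem : m * Θ q ∈ C := subset_tsupport f h2
      have : m = (m * Θ q) * (Θ q)⁻¹ := by group
      rw [hDdef]
      right
      rw [this]
      exact Set.mul_mem_mul hmem (Set.mem_image_of_mem _ (Set.mem_univ q))
    · left
      exact subset_tsupport f hfm
  have hK0 : IsCompact {p | φ p ≠ 0} :=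
    (hD.prod isCompact_univ).of_isClosed_subset hK0closed hsub
  have hρ : Continuous fun p : PGL2 F × (Q × Sball F) => ‖(p.2.2 : F)‖ :=
    (continuous_subtype_val.comp (continuous_snd.comp continuous_snd)).norm
  rcases Set.eq_empty_or_nonempty {p | φ p ≠ 0} with hemp | hne
  · refine ⟨1, one_pos, fun κ t ht m => ?_⟩
    have : (m, (κ, t)) ∉ {p : PGL2 F × (Q × Sball F) | φ p ≠ 0} := by rw [hemp]; simp
    simp only [Set.mem_setOf_eq, not_not] at this
    have := sub_eq_zero.mp this
    exact this
  · obtain ⟨p0, hp0, hmin⟩ := hK0.exists_isMinOn hne hρ.continuousOn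
    set v := ‖((p0.2.2 : Sball F) : F)‖ with hv
    have hvpos : 0 < v := by
      rcases lt_or_eq_of_le (norm_nonneg ((p0.2.2 : Sball F) : F)) with h | h
      · exact h
      · exfalso
        have ht0 : ((p0.2.2 : Sball F) : F) = 0 := by
          rw [← norm_eq_zero]; exact h.symm
        have : p0.2.2 = (⟨0, by norm_num⟩ : Sball F) := Subtype.ext ht0
        have hΘ0 : Θ p0.2 = 1 := by
          have hp2 : p0.2 = (p0.2.1, (⟨0, by norm_num⟩ : Sball F)) := by
            rw [← this]
          rw [hp2, hΘ1]
        exact hp0 (show φ p0 = 0 by simp [hφdef, hΘ0])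
    refine ⟨v / 2, by linarith, fun κ t ht m => ?_⟩
    have hnot : (m, (κ, t)) ∉ {p : PGL2 F × (Q × Sball F) | φ p ≠ 0} := by
      intro hmem
      have := hmin hmem
      simp only [Set.mem_setOf_eq] at this
      have h2 : v ≤ ‖(t : F)‖ := this
      linarith
    simp only [Set.mem_setOf_eq, not_not] at hnot
    exact sub_eq_zero.mp hnot
end Aux6
section Aux7
variable {F : Type} [NontriviallyNormedField F] [LocallyCompactSpace F]
local notation "M2" => Matrix (Fin 2) (Fin 2) F

def bu (t : Sball F) : Fˣ :=
  Units.mk0 (1 + t.1) (by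
    intro h
    have h1 : t.1 = -1 := by linear_combination h
    have h2 := t.2
    rw [h1, norm_neg, norm_one] at h2
    linarith)

@[simp] lemma bu_val (t : Sball F) : ((bu t : Fˣ) : F) = 1 + t.1 := rfl

lemma bu_zero (h : ‖(0:F)‖ ≤ (1:ℝ)/2) : bu ⟨0, h⟩ = 1 := by
  apply Units.ext
  simp

lemma continuous_km (ch : Bool) :
    Continuous (fun s : {s : F // ‖s‖ ≤ (1:ℝ)} => (km s.1 ch : GL2 F)) := by
  apply Units.continuous_iff.mpr
  constructor
  · apply continuous_matrix
    intro i j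
    cases ch <;>
      simp only [Function.comp_def, km_false_val, km_true_val] <;>
      fin_cases i <;> fin_cases j <;> simp <;> fun_prop
  · apply continuous_matrix
    intro i j
    cases ch <;>
      simp only [Function.comp_def, km_false_inv_val, km_true_inv_val] <;>
      fin_cases i <;> fin_cases j <;> simp <;> fun_prop

lemma continuous_diagT_bu :
    Continuous (fun t : Sball F => (diagT (bu t) : GL2 F)) := by
  have hne : ∀ t : Sball F, (1 : F) + t.1 ≠ 0 := fun t => (bu t).ne_zero
  apply Units.continuous_iff.mpr
  constructor
  · apply continuous_matrix
    intro i j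
    fin_cases i <;> fin_cases j <;> simp [diagT] <;> try fun_prop
  · have hval : ∀ t : Sball F, (((diagT (bu t))⁻¹ : GL2 F) : M2)
        = Matrix.of ![![((1 + t.1)⁻¹ : F), 0], ![0, 1]] := by
      intro t
      have : (((diagT (bu t))⁻¹ : GL2 F) : M2)
          = Matrix.of ![![(((bu t)⁻¹ : Fˣ) : F), 0], ![0, 1]] := rfl
      rw [this]
      first
        | rfl
        | (congr 1; simp)
    simp only [hval]
    apply continuous_matrix
    intro i j
    fin_cases i <;> fin_cases j <;> simp <;>
      first
        | exact Continuous.inv₀ (by fun_prop) hne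
        | fun_prop
end Aux7
section Aux8
variable {F : Type} [NontriviallyNormedField F] [LocallyCompactSpace F]

lemma smooth (f : PGL2 F → ℂ) (hlc : IsLocallyConstant f) (hcs : HasCompactSupport f) :
    ∃ δ : ℝ, 0 < δ ∧ δ ≤ (1:ℝ)/2 ∧ ∀ (s : F), ‖s‖ ≤ 1 → ∀ (ch : Bool) (b : Fˣ),
      ‖(b : F) - 1‖ ≤ δ → ∀ m : PGL2 F,
        f (m * pgl (km s ch * diagT b * (km s ch)⁻¹)) = f m := by
  haveI : ProperSpace F :=
    ProperSpace.of_nontriviallyNormedField_of_weaklyLocallyCompactSpace F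
  haveI : CompactSpace {s : F // ‖s‖ ≤ (1:ℝ)} := by
    have h1 : IsCompact {s : F | ‖s‖ ≤ (1:ℝ)} := by
      have : {s : F | ‖s‖ ≤ (1:ℝ)} = Metric.closedBall 0 1 := by
        ext t; simp [Metric.mem_closedBall, dist_zero_right]
      rw [this]
      exact isCompact_closedBall _ _
    exact isCompact_iff_compactSpace.mp h1
  have hΘcont : ∀ ch : Bool,
      Continuous (fun q : {s : F // ‖s‖ ≤ (1:ℝ)} × Sball F =>
        pgl (km q.1.1 ch * diagT (bu q.2) * (km q.1.1 ch)⁻¹)) := by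
    intro ch
    have h1 : Continuous (fun q : {s : F // ‖s‖ ≤ (1:ℝ)} × Sball F =>
        (km q.1.1 ch * diagT (bu q.2) * (km q.1.1 ch)⁻¹ : GL2 F)) := by
      have ha : Continuous (fun q : {s : F // ‖s‖ ≤ (1:ℝ)} × Sball F =>
          (km q.1.1 ch : GL2 F)) := (continuous_km (F := F) ch).comp continuous_fst
      have hb : Continuous (fun q : {s : F // ‖s‖ ≤ (1:ℝ)} × Sball F =>
          (diagT (bu q.2) : GL2 F)) := continuous_diagT_bu.comp continuous_snd
      exact (ha.mul hb).mul ha.inv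
    exact QuotientGroup.continuous_mk.comp h1
  have hΘ1 : ∀ (ch : Bool) (κ : {s : F // ‖s‖ ≤ (1:ℝ)}),
      pgl (km κ.1 ch * diagT (bu ⟨0, by norm_num⟩) * (km κ.1 ch)⁻¹) = 1 := by
    intro ch κ
    rw [bu_zero, diagT_one, mul_one, mul_inv_cancel, map_one]
  obtain ⟨δ₀, hδ₀, h0⟩ := tube f hlc hcs _ (hΘcont false) (hΘ1 false)
  obtain ⟨δ₁, hδ₁, h1⟩ := tube f hlc hcs _ (hΘcont true) (hΘ1 true)
  refine ⟨min (min δ₀ δ₁) ((1:ℝ)/2), by positivity, min_le_right _ _, ?_⟩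
  intro s hs ch b hb m
  have ht2 : ‖(b : F) - 1‖ ≤ (1:ℝ)/2 := hb.trans (min_le_right _ _)
  set tS : Sball F := ⟨(b : F) - 1, ht2⟩ with htS
  have hbu : bu tS = b := by
    apply Units.ext
    rw [bu_val]
    ring
  cases ch
  · have := h0 ⟨s, hs⟩ tS (hb.trans ((min_le_left _ _).trans (min_le_left _ _))) m
    rwa [hbu] at this
  · have := h1 ⟨s, hs⟩ tS (hb.trans ((min_le_left _ _).trans (min_le_right _ _))) m
    rwa [hbu] at this
end Aux8
section Aux9
variable {F : Type} [NontriviallyNormedField F]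
local notation "M2" => Matrix (Fin 2) (Fin 2) F

lemma pOf_unip (y : F) : pOf (pgl (unip y : GL2 F)) = 0 := by
  rw [pOf_pgl]
  have htr : Matrix.trace ((unip y : GL2 F) : M2) = 2 := by
    simp [unip, Matrix.trace_fin_two]
    norm_num
  have hdet : Matrix.det ((unip y : GL2 F) : M2) = 1 := by
    simp [unip, Matrix.det_fin_two]
  rw [htr, hdet]
  norm_num

lemma conj3 (e : Fˣ) (y : F) :
    (diagT e : GL2 F) * unip y * (diagT e)⁻¹ = unip ((e : F) * y) := by
  rw [conj2]
  exact mul_inv_cancel_right _ _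

lemma main_conj (s : F) (ch : Bool) (a b : Fˣ) (x₀ x : F) :
    (km s ch * (diagT a * unip x₀)) * (diagT b * unip x) * (km s ch * (diagT a * unip x₀))⁻¹
      = (km s ch * unip (((a * b : Fˣ) : F) * x + (a : F) * (1 - (b : F)) * x₀)
          * (km s ch)⁻¹)
        * (km s ch * diagT b * (km s ch)⁻¹) := by
  have h2 : (diagT a * unip x₀ : GL2 F) * (diagT b * unip x) * (diagT a * unip x₀)⁻¹
      = unip (((a * b : Fˣ) : F) * x + (a : F) * (1 - (b : F)) * x₀) * diagT b := by
    rw [conj1]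
    exact mul_inv_cancel_right _ _
  calc (km s ch * (diagT a * unip x₀)) * (diagT b * unip x)
        * (km s ch * (diagT a * unip x₀))⁻¹
      = km s ch * ((diagT a * unip x₀) * (diagT b * unip x) * (diagT a * unip x₀)⁻¹)
        * (km s ch)⁻¹ := by group
    _ = km s ch * (unip (((a * b : Fˣ) : F) * x + (a : F) * (1 - (b : F)) * x₀) * diagT b)
        * (km s ch)⁻¹ := by rw [h2]
    _ = _ := by group
end Aux9
/-- Lemma `extension` of Bezrukavnikov–Kazhdan: for
`G = PGL(2,F)`, `F` of characteristic zero, if `f ∈ S(G)` is such that its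
restriction to the set `N̄` of unipotent elements lies in `K_u` (its integral
over the unipotent radical of every Borel subgroup vanishes), then there is
`ε > 0` such that the restriction of `f` to `G^ε = {g : |p(g)| ≤ ε}` is
weightless, i.e. has vanishing integrals over all cosets `l·U_Q` of unipotent
radicals of Borel subgroups `Q = L·U_Q`, `l ∈ L`.  (Restrictions are
implemented as extension-by-zero via `Set.indicator`.) -/
theorem statement6
    (hna : IsNonarchimedean (fun x : F => ‖x‖))
    (μF : Measure F) [μF.IsAddHaarMeasure]
    (f : PGL2 F → ℂ) (hlc : IsLocallyConstant f) (hcs : HasCompactSupport f)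
    (hres : ∀ g : PGL2 F,
      Integrable
        (fun x : F => (unipSet F).indicator f (g * pgl (unip x) * g⁻¹)) μF ∧
      ∫ x : F, (unipSet F).indicator f (g * pgl (unip x) * g⁻¹) ∂μF = 0) :
    ∃ ε : ℝ, 0 < ε ∧
      ∀ (g : PGL2 F) (b : Fˣ),
        Integrable
          (fun x : F =>
            (Geps F ε).indicator f (g * pgl (diagT b * unip x) * g⁻¹)) μF ∧
        ∫ x : F,
            (Geps F ε).indicator f (g * pgl (diagT b * unip x) * g⁻¹) ∂μF
          = 0 := by
  obtain ⟨δ, hδpos, hδhalf, hsm⟩ := smooth f hlc hcs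
  refine ⟨δ ^ 2, by positivity, ?_⟩
  intro g b
  obtain ⟨s, ch, a, x₀, hs, hg⟩ := iwasawa g
  have hgW : g = pgl (km s ch * (diagT a * unip x₀)) := by rw [map_mul]; exact hg
  have hW : ∀ x : F, g * pgl (diagT b * unip x) * g⁻¹
      = pgl ((km s ch * (diagT a * unip x₀)) * (diagT b * unip x)
          * (km s ch * (diagT a * unip x₀))⁻¹) := by
    intro x
    rw [hgW, ← map_inv, ← map_mul, ← map_mul]
  have hpOf : ∀ x : F, pOf (g * pgl (diagT b * unip x) * g⁻¹)
      = ((b : F) - 1) ^ 2 / (b : F) := by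
    intro x
    rw [hW x, pOf_pgl_conj, pOf_DU]
  by_cases hcc : ‖((b : F) - 1) ^ 2 / (b : F)‖ ≤ δ ^ 2
  · -- main case: the coset lies in `Geps`
    have hε1 : δ ^ 2 < 1 := by nlinarith
    obtain ⟨hb1, hb2⟩ := norm_analysis hna hε1 hcc
    have hbδ : ‖(b : F) - 1‖ ≤ δ := by nlinarith [norm_nonneg ((b : F) - 1)]
    set e : Fˣ := a * b with he
    set d : F := (a : F) * (1 - (b : F)) * x₀ / (e : F) with hd
    set g'' : PGL2 F := pgl (km s ch * diagT e) with hg''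
    obtain ⟨hInt, hZero⟩ := hres g''
    have hG0 : ∀ y : F, (unipSet F).indicator f (g'' * pgl (unip y) * g''⁻¹)
        = f (pgl (km s ch * unip ((e : F) * y) * (km s ch)⁻¹)) := by
      intro y
      have he1 : g'' * pgl (unip y) * g''⁻¹
          = pgl ((km s ch * diagT e) * unip y * (km s ch * diagT e)⁻¹) := by
        rw [hg'', ← map_inv, ← map_mul, ← map_mul]
      have he2 : (km s ch * diagT e) * unip y * (km s ch * diagT e)⁻¹
          = km s ch * unip ((e : F) * y) * (km s ch)⁻¹ := by
        calc (km s ch * diagT e) * unip y * (km s ch * diagT e)⁻¹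
            = km s ch * (diagT e * unip y * (diagT e)⁻¹) * (km s ch)⁻¹ := by group
          _ = km s ch * unip ((e : F) * y) * (km s ch)⁻¹ := by rw [conj3]
      have hmem : g'' * pgl (unip y) * g''⁻¹ ∈ unipSet F := by
        show pOf _ = 0
        rw [he1, pOf_pgl_conj, pOf_unip]
      rw [Set.indicator_of_mem hmem, he1, he2]
    have hT : ∀ x : F, (Geps F (δ ^ 2)).indicator f (g * pgl (diagT b * unip x) * g⁻¹)
        = (unipSet F).indicator f (g'' * pgl (unip (x + d)) * g''⁻¹) := by
      intro x
      have hmem : g * pgl (diagT b * unip x) * g⁻¹ ∈ Geps F (δ ^ 2) := by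
        show ‖pOf _‖ ≤ δ ^ 2
        rw [hpOf x]
        exact hcc
      have ha0 : (a : F) ≠ 0 := Units.ne_zero a
      have hb0 : (b : F) ≠ 0 := Units.ne_zero b
      have he0 : (e : F) ≠ 0 := Units.ne_zero e
      have harg : (e : F) * (x + d)
          = ((a * b : Fˣ) : F) * x + (a : F) * (1 - (b : F)) * x₀ := by
        have hecoe : (e : F) = (a : F) * (b : F) := by rw [he, Units.val_mul]
        rw [hd, hecoe]
        field_simp
      rw [Set.indicator_of_mem hmem, hW x, main_conj, map_mul, hsm s hs ch b hbδ,
        hG0 (x + d), harg]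
    have hfun : (fun x : F => (Geps F (δ ^ 2)).indicator f (g * pgl (diagT b * unip x) * g⁻¹))
        = fun x : F => (unipSet F).indicator f (g'' * pgl (unip (x + d)) * g''⁻¹) :=
      funext hT
    constructor
    · rw [hfun]
      exact hInt.comp_add_right d
    · rw [hfun]
      have key := MeasureTheory.integral_add_right_eq_self (μ := μF)
        (fun y : F => (unipSet F).indicator f (g'' * pgl (unip y) * g''⁻¹)) d
      rw [key]
      exact hZero
  · -- the coset misses `Geps`: everything vanishes
    have hT : ∀ x : F,
        (Geps F (δ ^ 2)).indicator f (g * pgl (diagT b * unip x) * g⁻¹) = 0 := by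
      intro x
      apply Set.indicator_of_notMem
      show ¬ ‖pOf _‖ ≤ δ ^ 2
      rw [hpOf x]
      exact hcc
    have hfun : (fun x : F => (Geps F (δ ^ 2)).indicator f (g * pgl (diagT b * unip x) * g⁻¹))
        = fun _ : F => (0 : ℂ) := funext hT
    rw [hfun]
    exact ⟨integrable_zero F ℂ μF, integral_zero F ℂ⟩
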